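/- Let m > 0, k > 0, T > 0, α ∈ (0,1), n ≥ 1, Δt = T/n, t_k = kT/n, and b(x) = (m + 1/2)·x⁻¹ − (k/2)·x. Let M : [0,T] → ℝ and let z : [0,T] → ℝ be α-Hölder continuous with constant K and satisfy z_t = z_0 + ∫_0^t b(z_s) ds + (M_t − M_0) for all t ∈ [0,T], with inf_{t∈[0,T]} z_t > 0. Let (z_k^n)_{k=0,…,n} be positive reals with z_0^n = z_0 satisfying z_{k+1}^n = z_k^n + b(z_{k+1}^n)·Δt + (M(t_{k+1}) − M(t_k)). Suppose all values z_t (t ∈ [0,T]) and z_k^n (0 ≤ k ≤ n) lie in a compact interval [a, A] ⊂ (0,∞), and let L be a Lipschitz constant of b on [a, A]. Then max_{0 ≤ k ≤ n} | z_k^n − z_{t_k} | ≤ L·K·T^{1+α} / ((1 + α)·n^α). -/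

import Mathlib

/-- Grid-point error estimate for the implicit Euler scheme for the singular
equation `dz = b(z) dt + dM`, `b x = (m + 1/2) x⁻¹ - (k/2) x`: if the exact solution `z` is
`α`-Hölder with constant `K`, all values of `z` and of the scheme lie in a compact interval
`[a, A] ⊂ (0,∞)` on which `b` is `L`-Lipschitz, then
`max_k |z_k^n - z(t_k)| ≤ L K T^{1+α} / ((1+α) n^α)`. -/
theorem stmt_4 (m k T α : ℝ) (hm : 0 < m) (hk : 0 < k) (hT : 0 < T)
    (hα : α ∈ Set.Ioo (0:ℝ) 1) (n : ℕ) (hn : 1 ≤ n)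
    (b : ℝ → ℝ) (hb : ∀ x : ℝ, 0 < x → b x = (m + 1/2) * x⁻¹ - (k/2) * x)
    (M z : ℝ → ℝ) (K : ℝ) (hK : 0 ≤ K)
    (hzHolder : ∀ s ∈ Set.Icc (0:ℝ) T, ∀ t ∈ Set.Icc (0:ℝ) T,
      |z t - z s| ≤ K * |t - s| ^ α)
    (hzeq : ∀ t ∈ Set.Icc (0:ℝ) T,
      z t = z 0 + (∫ s in (0:ℝ)..t, b (z s)) + (M t - M 0))
    (a A : ℝ) (ha : 0 < a) (haA : a ≤ A)
    (hzmem : ∀ t ∈ Set.Icc (0:ℝ) T, z t ∈ Set.Icc a A)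
    (hzpos : ∀ t ∈ Set.Icc (0:ℝ) T, 0 < z t)
    (zn : ℕ → ℝ) (hzn0 : zn 0 = z 0)
    (hznmem : ∀ i ≤ n, zn i ∈ Set.Icc a A)
    (hrec : ∀ i < n, 0 < zn (i+1) ∧
      zn (i+1) = zn i + b (zn (i+1)) * (T / n)
        + (M (((i:ℝ)+1) * T / n) - M ((i:ℝ) * T / n)))
    (L : ℝ) (hL : 0 ≤ L)
    (hLip : ∀ x ∈ Set.Icc a A, ∀ y ∈ Set.Icc a A, |b x - b y| ≤ L * |x - y|) :
    ∀ i ≤ n, |zn i - z ((i:ℝ) * T / n)| ≤ L * K * T ^ (1 + α) / ((1 + α) * (n:ℝ) ^ α) := by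
  obtain ⟨hα0, hα1⟩ := hα
  have hn0 : (0:ℝ) < n := by
    have : 0 < n := by omega
    exact_mod_cast this
  set Δ : ℝ := T / n with hΔdef
  have hΔ0 : 0 < Δ := div_pos hT hn0
  have h1α : (0:ℝ) < 1 + α := by linarith
  -- grid points lie in [0, T]
  have htmem : ∀ i : ℕ, i ≤ n → (i:ℝ) * T / n ∈ Set.Icc (0:ℝ) T := by
    intro i hi
    have hi' : (i:ℝ) ≤ n := by exact_mod_cast hi
    constructor
    · positivity
    · rw [div_le_iff₀ hn0]
      nlinarith
  -- continuity of rpow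
  have hrpow : Continuous (fun u : ℝ => u ^ α) := by
    rw [continuous_iff_continuousAt]
    intro x
    exact Real.continuousAt_rpow_const x α (Or.inr hα0.le)
  -- z is continuous on [0, T]
  have hzcont : ContinuousOn z (Set.Icc 0 T) := by
    intro t₀ ht₀
    have hc : ContinuousAt (fun t : ℝ => K * |t - t₀| ^ α) t₀ :=
      (continuous_const.mul (hrpow.comp ((continuous_id.sub continuous_const).abs))).continuousAt
    have hg : Filter.Tendsto (fun t => K * |t - t₀| ^ α)
        (nhdsWithin t₀ (Set.Icc 0 T)) (nhds 0) := by
      have h0 : K * |t₀ - t₀| ^ α = 0 := by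
        simp [Real.zero_rpow hα0.ne']
      have := (hc.continuousWithinAt (s := Set.Icc 0 T))
      rw [ContinuousWithinAt] at this
      rwa [h0] at this
    have hz0 : Filter.Tendsto (fun t => z t - z t₀)
        (nhdsWithin t₀ (Set.Icc 0 T)) (nhds 0) := by
      apply squeeze_zero_norm' _ hg
      filter_upwards [self_mem_nhdsWithin] with t ht
      simpa [Real.norm_eq_abs] using hzHolder t₀ ht₀ t ht
    have := hz0.add (tendsto_const_nhds (x := z t₀))
    simp at this; exact this
  -- b ∘ z is continuous on [0, T]
  have hbz : ContinuousOn (fun s => b (z s)) (Set.Icc 0 T) := by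
    have hcont : ContinuousOn (fun s => (m + 1/2) * (z s)⁻¹ - (k/2) * z s) (Set.Icc 0 T) :=
      (continuousOn_const.mul (hzcont.inv₀ fun t ht => (hzpos t ht).ne')).sub
        (continuousOn_const.mul hzcont)
    exact hcont.congr fun t ht => hb (z t) (hzpos t ht)
  -- interval integrability of b ∘ z
  have hint : ∀ u ∈ Set.Icc (0:ℝ) T, ∀ v ∈ Set.Icc (0:ℝ) T,
      IntervalIntegrable (fun s => b (z s)) MeasureTheory.volume u v := by
    intro u hu v hv
    apply ContinuousOn.intervalIntegrable
    apply hbz.mono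
    rw [← Set.uIcc_of_le hT.le]
    exact Set.uIcc_subset_uIcc (by rwa [Set.uIcc_of_le hT.le]) (by rwa [Set.uIcc_of_le hT.le])
  -- the per-step constant
  set C : ℝ := L * K * Δ ^ (1 + α) / (1 + α) with hCdef
  have hC0 : 0 ≤ C := by positivity
  -- monotonicity of b at positive points
  have hmono : ∀ x y : ℝ, 0 < x → 0 < y → (b x - b y) * (x - y) ≤ 0 := by
    intro x y hx hy
    rw [hb x hx, hb y hy]
    have hxy : 0 < x * y := mul_pos hx hy
    have heq : ((m + 1/2) * x⁻¹ - k/2 * x - ((m + 1/2) * y⁻¹ - k/2 * y)) * (x - y)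
        = -((m + 1/2) * (x - y)^2 / (x * y)) - (k/2) * (x - y)^2 := by
      field_simp
      ring
    rw [heq]
    have h1 : 0 ≤ (m + 1/2) * (x - y)^2 / (x * y) :=
      div_nonneg (mul_nonneg (by linarith) (sq_nonneg _)) hxy.le
    have h2 : 0 ≤ (k/2) * (x - y)^2 := mul_nonneg (by linarith) (sq_nonneg _)
    linarith
  -- main induction
  have key : ∀ i, i ≤ n → |zn i - z ((i:ℝ) * T / n)| ≤ (i:ℝ) * C := by
    intro i
    induction i with
    | zero => intro _; simp [hzn0]
    | succ i ih =>
      intro hin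
      have hilt : i < n := Nat.lt_of_succ_le hin
      have hie := ih hilt.le
      set ti : ℝ := (i:ℝ) * T / n with hti_def
      set ti1 : ℝ := ((i:ℝ) + 1) * T / n with hti1_def
      have hti : ti ∈ Set.Icc (0:ℝ) T := htmem i hilt.le
      have hti1 : ti1 ∈ Set.Icc (0:ℝ) T := by
        have := htmem (i+1) hin
        rwa [Nat.cast_add, Nat.cast_one] at this
      have hΔstep : ti1 - ti = Δ := by
        rw [hti_def, hti1_def, hΔdef]
        field_simp
        ring
      have htile : ti ≤ ti1 := by linarith
      obtain ⟨hx0, hxeq⟩ := hrec i hilt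
      set x : ℝ := zn (i+1) with hxdef
      set y : ℝ := z ti1 with hydef
      have hy0 : 0 < y := hzpos ti1 hti1
      -- solution increment over [ti, ti1]
      have h0mem : (0:ℝ) ∈ Set.Icc (0:ℝ) T := ⟨le_refl _, hT.le⟩
      have hadj : (∫ s in (0:ℝ)..ti, b (z s)) + (∫ s in ti..ti1, b (z s))
          = ∫ s in (0:ℝ)..ti1, b (z s) :=
        intervalIntegral.integral_add_adjacent_intervals
          (hint 0 h0mem ti hti) (hint ti hti ti1 hti1)
      have e1 := hzeq ti1 hti1
      have e2 := hzeq ti hti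
      -- remainder
      set R : ℝ := b y * Δ - ∫ s in ti..ti1, b (z s) with hRdef
      -- the error recurrence
      have hErec : x - y = (zn i - z ti) + (b x - b y) * Δ + R := by
        have hy' : y = z ti + (∫ s in ti..ti1, b (z s)) + (M ti1 - M ti) := by
          rw [hydef, e1, e2]
          linarith [hadj]
        have hx' : x = zn i + b x * Δ + (M ti1 - M ti) := hxeq
        rw [hRdef]
        linear_combination hx' - hy'
      -- bound on the remainder
      have hRbound : |R| ≤ C := by
        have hconst : (∫ _s in ti..ti1, b y) = b y * Δ := by
          rw [intervalIntegral.integral_const, hΔstep, smul_eq_mul, mul_comm]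
        have hsub : R = ∫ s in ti..ti1, (b y - b (z s)) := by
          rw [intervalIntegral.integral_sub intervalIntegrable_const (hint ti hti ti1 hti1),
            hconst, hRdef]
        have hsubset : Set.Icc ti ti1 ⊆ Set.Icc (0:ℝ) T :=
          Set.Icc_subset_Icc hti.1 hti1.2
        -- continuity/integrability of integrands
        have hf_int : IntervalIntegrable (fun s => |b y - b (z s)|)
            MeasureTheory.volume ti ti1 := by
          apply IntervalIntegrable.abs
          have : IntervalIntegrable (fun s => b (z s)) MeasureTheory.volume ti ti1 :=
            hint ti hti ti1 hti1
          exact (intervalIntegrable_const (c := b y)).sub this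
        have hg_cont : Continuous (fun s : ℝ => L * K * (ti1 - s) ^ α) :=
          continuous_const.mul (hrpow.comp (continuous_const.sub continuous_id))
        have hg_int : IntervalIntegrable (fun s : ℝ => L * K * (ti1 - s) ^ α)
            MeasureTheory.volume ti ti1 := hg_cont.intervalIntegrable _ _
        have hpt : ∀ s ∈ Set.Icc ti ti1, |b y - b (z s)| ≤ L * K * (ti1 - s) ^ α := by
          intro s hs
          have hsT : s ∈ Set.Icc (0:ℝ) T := hsubset hs
          have h1 : |b y - b (z s)| ≤ L * |y - z s| :=
            hLip y (hzmem ti1 hti1) (z s) (hzmem s hsT)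
          have h2 : |y - z s| ≤ K * |ti1 - s| ^ α := by
            rw [hydef]
            exact hzHolder s hsT ti1 hti1
          have h3 : |ti1 - s| = ti1 - s := abs_of_nonneg (by linarith [hs.2])
          rw [h3] at h2
          calc |b y - b (z s)| ≤ L * |y - z s| := h1
            _ ≤ L * (K * (ti1 - s) ^ α) := mul_le_mul_of_nonneg_left h2 hL
            _ = L * K * (ti1 - s) ^ α := by ring
        -- compute the bounding integral
        have hcomp : (∫ s in ti..ti1, (ti1 - s) ^ α) = Δ ^ (1 + α) / (1 + α) := by
          rw [intervalIntegral.integral_comp_sub_left (fun u => u ^ α) ti1]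
          rw [sub_self, hΔstep]
          rw [integral_rpow (Or.inl (by linarith : (-1:ℝ) < α))]
          rw [Real.zero_rpow (by linarith : α + 1 ≠ 0)]
          rw [add_comm α 1]
          ring
        have hgval : (∫ s in ti..ti1, L * K * (ti1 - s) ^ α) = C := by
          rw [intervalIntegral.integral_const_mul, hcomp, hCdef]
          ring
        calc |R| = |∫ s in ti..ti1, (b y - b (z s))| := by rw [hsub]
          _ ≤ ∫ s in ti..ti1, |b y - b (z s)| :=
              intervalIntegral.abs_integral_le_integral_abs htile
          _ ≤ ∫ s in ti..ti1, L * K * (ti1 - s) ^ α :=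
              intervalIntegral.integral_mono_on htile hf_int hg_int hpt
          _ = C := hgval
      -- the implicit-scheme contraction step
      set E : ℝ := x - y with hEdef
      set e : ℝ := zn i - z ti with hedef
      have hie' : |e| ≤ (i:ℝ) * C := hie
      have hmonoE : (b x - b y) * E ≤ 0 := hmono x y hx0 hy0
      have hsq : E ^ 2 ≤ |E| * (|e| + |R|) := by
        have hsplit : E ^ 2 = E * (e + R) + (b x - b y) * E * Δ := by
          calc E ^ 2 = E * (e + (b x - b y) * Δ + R) := by rw [← hErec]; ring
            _ = E * (e + R) + (b x - b y) * E * Δ := by ring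
        have h1 : E * (e + R) ≤ |E| * (|e| + |R|) := by
          calc E * (e + R) ≤ |E * (e + R)| := le_abs_self _
            _ = |E| * |e + R| := abs_mul _ _
            _ ≤ |E| * (|e| + |R|) :=
                mul_le_mul_of_nonneg_left (abs_add_le _ _) (abs_nonneg _)
        have h2 : (b x - b y) * E * Δ ≤ 0 :=
          mul_nonpos_of_nonpos_of_nonneg hmonoE hΔ0.le
        linarith [hsplit, h1, h2]
      have hEle : |E| ≤ |e| + |R| := by
        rcases eq_or_ne E 0 with hE0 | hE0
        · rw [hE0, abs_zero]
          positivity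
        · have hEpos : 0 < |E| := abs_pos.mpr hE0
          have : |E| * |E| ≤ |E| * (|e| + |R|) := by
            rw [← abs_mul, abs_mul_self]
            calc E * E = E ^ 2 := by ring
              _ ≤ |E| * (|e| + |R|) := hsq
          exact le_of_mul_le_mul_left this hEpos
      have : |E| ≤ ((i:ℝ) + 1) * C := by
        calc |E| ≤ |e| + |R| := hEle
          _ ≤ (i:ℝ) * C + C := add_le_add hie' hRbound
          _ = ((i:ℝ) + 1) * C := by ring
      have hgoal : |zn (i+1) - z (((i:ℕ)+1 : ℕ) * T / n)| ≤ (((i:ℕ)+1 : ℕ) : ℝ) * C := by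
        push_cast
        exact this
      exact_mod_cast hgoal
  -- conclude
  intro i hi
  have hkey := key i hi
  have hnα : (0:ℝ) < (n:ℝ) ^ α := Real.rpow_pos_of_pos hn0 α
  have hnC : (n:ℝ) * C = L * K * T ^ (1 + α) / ((1 + α) * (n:ℝ) ^ α) := by
    rw [hCdef, hΔdef]
    rw [Real.div_rpow hT.le hn0.le]
    rw [Real.rpow_add hn0 1 α, Real.rpow_one]
    field_simp
  have hiC : (i:ℝ) * C ≤ (n:ℝ) * C := by
    have : (i:ℝ) ≤ n := by exact_mod_cast hi
    exact mul_le_mul_of_nonneg_right this hC0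
  rw [← hnC]
  exact hkey.trans hiC
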